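/- Let p and q be distinct primes. If C and D are clones on ZMod p × ZMod q containing addition, and for every function r : (ZMod q)^l → ZMod p and every 0 ≤ i ≤ p the induced monomial function (x,y) ↦ (r(y₁,...,y_l)·x₁⋯xᵢ, 0) lies in C iff it lies in D, and symmetrically for every r' : (ZMod p)^l → ZMod q and every 0 ≤ j ≤ q the function (x,y) ↦ (0, r'(x₁,...,x_l)·y₁⋯yⱼ) lies in C iff it lies in D, then C = D. -/

import Mathlib

/-- A clone on a set `A`. -/
def IsClone {A : Type*} (C : ∀ n : ℕ, Set ((Fin n → A) → A)) : Prop :=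
  (∀ (n : ℕ) (i : Fin n), (fun x => x i) ∈ C n) ∧
  ∀ (n m : ℕ) (f : (Fin n → A) → A) (g : Fin n → (Fin m → A) → A),
    f ∈ C n → (∀ i, g i ∈ C m) → (fun x => f (fun i => g i x)) ∈ C m

/-- The induced monomial function `(x, y) ↦ (r(y₁,…,y_l) · x₁⋯xᵢ, 0)`, of arity
`max l i`, for a coefficient function `r : (ZMod q)^l → ZMod p`. -/
def indMonP (p q l i : ℕ) (r : (Fin l → ZMod q) → ZMod p) :
    (Fin (max l i) → ZMod p × ZMod q) → ZMod p × ZMod q :=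
  fun x => (r (fun j => (x (Fin.castLE (le_max_left l i) j)).2) *
    ∏ j : Fin i, (x (Fin.castLE (le_max_right l i) j)).1, 0)

/-- The induced monomial function `(x, y) ↦ (0, r'(x₁,…,x_l) · y₁⋯yⱼ)`, of arity
`max l j`, for a coefficient function `r' : (ZMod p)^l → ZMod q`. -/
def indMonQ (p q l j : ℕ) (r' : (Fin l → ZMod p) → ZMod q) :
    (Fin (max l j) → ZMod p × ZMod q) → ZMod p × ZMod q :=
  fun x => (0, r' (fun i => (x (Fin.castLE (le_max_left l j) i)).1) *
    ∏ i : Fin j, (x (Fin.castLE (le_max_right l j) i)).2)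

namespace CDIM
open Finset




/-! ### Generic clone lemmas -/

def IsClone' {A : Type*} (C : ∀ n : ℕ, Set ((Fin n → A) → A)) : Prop :=
  (∀ (n : ℕ) (i : Fin n), (fun x => x i) ∈ C n) ∧
  ∀ (n m : ℕ) (f : (Fin n → A) → A) (g : Fin n → (Fin m → A) → A),
    f ∈ C n → (∀ i, g i ∈ C m) → (fun x => f (fun i => g i x)) ∈ C m

section clone
variable {A : Type*} {K : ∀ n : ℕ, Set ((Fin n → A) → A)} (hK : IsClone' K)
include hK

lemma proj_mem (n : ℕ) (i : Fin n) : (fun x => x i) ∈ K n := hK.1 n i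

lemma comp_mem {n m : ℕ} {f : (Fin n → A) → A} {g : Fin n → (Fin m → A) → A}
    (hf : f ∈ K n) (hg : ∀ i, g i ∈ K m) : (fun x => f (fun i => g i x)) ∈ K m :=
  hK.2 n m f g hf hg

lemma rename_mem {n m : ℕ} {f : (Fin n → A) → A} (hf : f ∈ K n) (σ : Fin n → Fin m) :
    (fun x => f (fun i => x (σ i))) ∈ K m :=
  hK.2 n m f (fun i x => x (σ i)) hf (fun i => hK.1 m (σ i))

end clone

section cloneAdd
variable {p q : ℕ} {K : ∀ n : ℕ, Set ((Fin n → ZMod p × ZMod q) → ZMod p × ZMod q)}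
  (hK : IsClone' K) (hadd : (fun x : Fin 2 → ZMod p × ZMod q => x 0 + x 1) ∈ K 2)

include hK hadd

lemma add_mem {n : ℕ} {f g : (Fin n → ZMod p × ZMod q) → ZMod p × ZMod q}
    (hf : f ∈ K n) (hg : g ∈ K n) : (fun x => f x + g x) ∈ K n := by
  have := hK.2 2 n (fun x => x 0 + x 1) ![f, g] hadd (by
    intro i; fin_cases i <;> simpa)
  simpa using this

lemma smul_mem_of_pos {n : ℕ} {f : (Fin n → ZMod p × ZMod q) → ZMod p × ZMod q}
    (hf : f ∈ K n) : ∀ (k : ℕ), 1 ≤ k → (fun x => k • f x) ∈ K n := by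
  intro k
  induction k with
  | zero => omega
  | succ k ih =>
    intro _
    rcases Nat.lt_or_ge k 1 with h | h
    · have hk0 : k = 0 := by omega
      subst hk0
      have heq : (fun x => (1 : ℕ) • f x) = f := funext fun x => one_smul ℕ _
      rw [heq]; exact hf
    · have := add_mem hK hadd (ih h) hf
      have heq : (fun x => (k + 1) • f x) = (fun x => k • f x + f x) :=
        funext fun x => succ_nsmul _ _
      rw [heq]; exact this

lemma smul_mem [Fact p.Prime] [Fact q.Prime] {n : ℕ}
    {f : (Fin n → ZMod p × ZMod q) → ZMod p × ZMod q}
    (hf : f ∈ K n) (k : ℕ) : (fun x => k • f x) ∈ K n := by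
  have hpq : 1 ≤ k + p * q := by
    have h1 := (Fact.out : p.Prime).pos; have h2 := (Fact.out : q.Prime).pos
    have := Nat.mul_pos h1 h2; omega
  have h := smul_mem_of_pos hK hadd hf (k + p * q) hpq
  have he : ∀ y : ZMod p × ZMod q, (k + p * q) • y = k • y := by
    intro y
    have : (p * q) • y = 0 := by
      ext
      · simp [Prod.smul_fst, nsmul_eq_mul, Nat.cast_mul]
      · simp [Prod.smul_snd, nsmul_eq_mul, Nat.cast_mul, mul_comm (p : ZMod q)]
    rw [add_nsmul, this, add_zero]
  simpa [he] using h

lemma sum_mem [Fact p.Prime] [Fact q.Prime] {n : ℕ} {ι : Type*} [DecidableEq ι]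
    {w : (Fin n → ZMod p × ZMod q) → ZMod p × ZMod q} (hw : w ∈ K n)
    (s : Finset ι) (g : ι → (Fin n → ZMod p × ZMod q) → ZMod p × ZMod q)
    (hg : ∀ i ∈ s, g i ∈ K n) : (fun x => ∑ i ∈ s, g i x) ∈ K n := by
  classical
  induction s using Finset.induction with
  | empty =>
    have := smul_mem hK hadd hw 0
    simpa using this
  | insert a s hx ih =>
    have h1 := hg a (Finset.mem_insert_self a s)
    have h2 := ih (fun i hi => hg i (Finset.mem_insert_of_mem hi))
    have := add_mem hK hadd h1 h2
    simpa [Finset.sum_insert hx] using this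

end cloneAdd






section vander
variable (p : ℕ) [Fact p.Prime]

noncomputable def Vm : Matrix (Fin p) (Fin p) (ZMod p) :=
  Matrix.vandermonde (fun i : Fin p => ((i : ℕ) : ZMod p))

noncomputable def Wm : Matrix (Fin p) (Fin p) (ZMod p) := (Vm p)⁻¹

def toFin (a : ZMod p) : Fin p :=
  haveI : NeZero p := ⟨(Fact.out : p.Prime).ne_zero⟩
  ⟨a.val, ZMod.val_lt a⟩

variable {p}

lemma castFin_toFin (a : ZMod p) : (((toFin p a : Fin p) : ℕ) : ZMod p) = a := by
  haveI : NeZero p := ⟨(Fact.out : p.Prime).ne_zero⟩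
  exact ZMod.natCast_rightInverse a

lemma toFin_cast (i : Fin p) : toFin p (((i : ℕ) : ZMod p)) = i := by
  apply Fin.ext
  show (((i : ℕ) : ZMod p)).val = i
  exact ZMod.val_cast_of_lt i.isLt

lemma toFin_injective : Function.Injective (toFin p) := by
  intro a b h
  have := congrArg (fun i : Fin p => (((i : ℕ)) : ZMod p)) h
  simpa [castFin_toFin] using this

noncomputable def zmodFinEquiv : ZMod p ≃ Fin p where
  toFun := toFin p
  invFun := fun i => ((i : ℕ) : ZMod p)
  left_inv := castFin_toFin
  right_inv := toFin_cast

lemma Vm_det_unit : IsUnit (Vm p).det := by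
  rw [isUnit_iff_ne_zero, Vm, Matrix.det_vandermonde]
  apply Finset.prod_ne_zero_iff.mpr
  intro i _
  apply Finset.prod_ne_zero_iff.mpr
  intro j hj
  have hij : i ≠ j := (Finset.mem_Ioi.mp hj).ne
  intro h0
  apply hij
  have h : ((i : ℕ) : ZMod p) = ((j : ℕ) : ZMod p) := by
    have := sub_eq_zero.mp h0; exact this.symm
  have := congrArg (toFin p) h
  simpa [toFin_cast] using this

/-- interpolation identity -/
lemma WI1 (u a : ZMod p) :
    (∑ k : Fin p, u ^ (k : ℕ) * Wm p k (toFin p a)) = if u = a then 1 else 0 := by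
  have h := Matrix.mul_nonsing_inv (Vm p) Vm_det_unit
  have h2 := congrFun (congrFun h (toFin p u)) (toFin p a)
  rw [Matrix.mul_apply] at h2
  have h3 : ∀ k : Fin p, Vm p (toFin p u) k = u ^ (k : ℕ) := by
    intro k; simp [Vm, Matrix.vandermonde, castFin_toFin]
  calc (∑ k : Fin p, u ^ (k : ℕ) * Wm p k (toFin p a))
      = ∑ k : Fin p, Vm p (toFin p u) k * Wm p k (toFin p a) := by
        apply Finset.sum_congr rfl; intro k _; rw [h3]
    _ = (1 : Matrix (Fin p) (Fin p) (ZMod p)) (toFin p u) (toFin p a) := h2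
    _ = if u = a then 1 else 0 := by
        rw [Matrix.one_apply]
        by_cases hua : u = a
        · simp [hua]
        · rw [if_neg (fun hc => hua (toFin_injective hc)), if_neg hua]

/-- extraction identity -/
lemma WI2 (k k' : Fin p) :
    (∑ a : ZMod p, Wm p k (toFin p a) * a ^ (k' : ℕ)) = if k = k' then 1 else 0 := by
  have h := Matrix.nonsing_inv_mul (Vm p) Vm_det_unit
  have h2 := congrFun (congrFun h k) k'
  rw [Matrix.mul_apply] at h2
  calc (∑ a : ZMod p, Wm p k (toFin p a) * a ^ (k' : ℕ))
      = ∑ i : Fin p, Wm p k i * ((i : ℕ) : ZMod p) ^ (k' : ℕ) := by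
        apply Fintype.sum_equiv zmodFinEquiv
        intro a
        simp only [zmodFinEquiv, Equiv.coe_fn_mk, castFin_toFin]
    _ = ∑ i : Fin p, Wm p k i * Vm p i k' := by
        apply Finset.sum_congr rfl; intro i _; simp [Vm, Matrix.vandermonde]
    _ = (1 : Matrix (Fin p) (Fin p) (ZMod p)) k k' := h2
    _ = if k = k' then 1 else 0 := Matrix.one_apply

/-- master interpolation: every function is a polynomial with canonical coefficients -/
lemma master {N : ℕ} (φ : (Fin N → ZMod p) → ZMod p) (u : Fin N → ZMod p) :
    ∑ m : Fin N → Fin p, (∑ a : Fin N → ZMod p,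
        (∏ t, Wm p (m t) (toFin p (a t))) * φ a) * (∏ t, u t ^ ((m t : ℕ))) = φ u := by
  classical
  have step1 : ∀ m : Fin N → Fin p, (∑ a : Fin N → ZMod p,
      (∏ t, Wm p (m t) (toFin p (a t))) * φ a) * (∏ t, u t ^ ((m t : ℕ)))
      = ∑ a : Fin N → ZMod p, φ a * ∏ t, (u t ^ ((m t : ℕ)) * Wm p (m t) (toFin p (a t))) := by
    intro m
    rw [Finset.sum_mul]
    apply Finset.sum_congr rfl
    intro a _
    rw [Finset.prod_mul_distrib]
    ring
  rw [Finset.sum_congr rfl (fun m _ => step1 m), Finset.sum_comm]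
  have step2 : ∀ a : Fin N → ZMod p,
      (∑ m : Fin N → Fin p, φ a * ∏ t, (u t ^ ((m t : ℕ)) * Wm p (m t) (toFin p (a t))))
      = φ a * if u = a then 1 else 0 := by
    intro a
    rw [← Finset.mul_sum]
    congr 1
    have := Finset.prod_univ_sum (fun _ : Fin N => (Finset.univ : Finset (Fin p)))
      (fun t k => u t ^ ((k : ℕ)) * Wm p k (toFin p (a t)))
    rw [Fintype.piFinset_univ] at this
    rw [← this]
    have : ∀ t : Fin N, (∑ k : Fin p, u t ^ ((k : ℕ)) * Wm p k (toFin p (a t)))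
        = if u t = a t then 1 else 0 := fun t => WI1 (u t) (a t)
    rw [Finset.prod_congr rfl (fun t _ => this t), Finset.prod_boole]
    by_cases h : u = a
    · subst h; simp
    · rw [if_neg, if_neg h]
      intro hc
      exact h (funext fun t => hc t (Finset.mem_univ t))
  rw [Finset.sum_congr rfl (fun a _ => step2 a)]
  simp only [mul_ite, mul_one, mul_zero]
  have : ∀ a : Fin N → ZMod p, (if u = a then φ a else 0) = if a = u then φ a else 0 := by
    intro a; by_cases h : u = a
    · subst h; simp
    · rw [if_neg h, if_neg (fun hc => h hc.symm)]
  rw [Finset.sum_congr rfl (fun a _ => this a), Finset.sum_ite_eq']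
  simp

end vander


/-! ### Part 2: normal forms and extraction -/

section extraction
variable (p q : ℕ) [Fact p.Prime] [Fact q.Prime]

/-- separated monomial normal form: coefficient reads second components of first `n`
slots, product over first components of last `N` slots with multiplicities `m`. -/
def Pf (n N : ℕ) (c : (Fin n → ZMod q) → ZMod p) (m : Fin N → ℕ) :
    (Fin (n + N) → ZMod p × ZMod q) → ZMod p × ZMod q :=
  fun x => (c (fun j => (x (Fin.castAdd N j)).2) * ∏ t, (x (Fin.natAdd n t)).1 ^ m t, 0)

def emb (n N : ℕ) (z : Fin n → ZMod q) (a : Fin N → ZMod p) :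
    Fin (n + N) → ZMod p × ZMod q :=
  Fin.addCases (fun j => ((0 : ZMod p), z j)) (fun t => (a t, (0 : ZMod q)))

noncomputable def coef (n N : ℕ) (g : (Fin (n+N) → ZMod p × ZMod q) → ZMod p × ZMod q)
    (m : Fin N → Fin p) : (Fin n → ZMod q) → ZMod p :=
  fun z => ∑ a : Fin N → ZMod p,
    (∏ t, Wm p (m t) (toFin p (a t))) * (g (emb p q n N z a)).1

/-- `g` is "separated": it depends only on the second components of the first `n`
slots and the first components of the last `N` slots, and has vanishing second
component. -/
def SepOf (n N : ℕ) (g : (Fin (n+N) → ZMod p × ZMod q) → ZMod p × ZMod q) : Prop :=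
  ∃ Φ : (Fin n → ZMod q) → (Fin N → ZMod p) → ZMod p,
    ∀ x, g x = (Φ (fun j => (x (Fin.castAdd N j)).2) (fun t => (x (Fin.natAdd n t)).1), 0)

variable {p q}

lemma sepOf_Pf {n N : ℕ} (c : (Fin n → ZMod q) → ZMod p) (m : Fin N → ℕ) :
    SepOf p q n N (Pf p q n N c m) :=
  ⟨fun z u => c z * ∏ t, u t ^ m t, fun _ => rfl⟩

lemma coef_eq_of_sep {n N : ℕ} {g : (Fin (n+N) → ZMod p × ZMod q) → ZMod p × ZMod q}
    (Φ : (Fin n → ZMod q) → (Fin N → ZMod p) → ZMod p)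
    (hΦ : ∀ x, g x = (Φ (fun j => (x (Fin.castAdd N j)).2)
      (fun t => (x (Fin.natAdd n t)).1), 0))
    (m : Fin N → Fin p) (z : Fin n → ZMod q) :
    coef p q n N g m z = ∑ a : Fin N → ZMod p,
      (∏ t, Wm p (m t) (toFin p (a t))) * Φ z a := by
  unfold coef
  apply Finset.sum_congr rfl
  intro a _
  congr 1
  rw [hΦ]
  simp only [emb]
  congr 1
  · funext j; simp [Fin.addCases_left]
  · funext t; simp [Fin.addCases_right]

/-- The key extraction identity. -/
lemma ext_identity {N : ℕ} (φ : (Fin N → ZMod p) → ZMod p) (m : Fin N → Fin p)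
    (u : Fin N → ZMod p) :
    ∑ a : Fin N → ZMod p,
      (∏ t, Wm p (m t) (toFin p (a t))) * φ (fun t => a t * u t)
    = (∑ a : Fin N → ZMod p, (∏ t, Wm p (m t) (toFin p (a t))) * φ a)
        * ∏ t, u t ^ ((m t : ℕ)) := by
  classical
  set c : (Fin N → Fin p) → ZMod p :=
    fun m' => ∑ a : Fin N → ZMod p, (∏ t, Wm p (m' t) (toFin p (a t))) * φ a with hc
  have hφ : ∀ v : Fin N → ZMod p,
      φ v = ∑ m' : Fin N → Fin p, c m' * ∏ t, v t ^ ((m' t : ℕ)) :=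
    fun v => (master φ v).symm
  calc ∑ a : Fin N → ZMod p, (∏ t, Wm p (m t) (toFin p (a t))) * φ (fun t => a t * u t)
      = ∑ a : Fin N → ZMod p, ∑ m' : Fin N → Fin p,
          (c m' * ∏ t, u t ^ ((m' t : ℕ))) *
            ∏ t, (Wm p (m t) (toFin p (a t)) * a t ^ ((m' t : ℕ))) := by
        apply Finset.sum_congr rfl; intro a _
        rw [hφ (fun t => a t * u t), Finset.mul_sum]
        apply Finset.sum_congr rfl; intro m' _
        have : (∏ t, (a t * u t) ^ ((m' t : ℕ)))
            = (∏ t, a t ^ ((m' t : ℕ))) * ∏ t, u t ^ ((m' t : ℕ)) := by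
          rw [← Finset.prod_mul_distrib]
          exact Finset.prod_congr rfl fun t _ => mul_pow _ _ _
        rw [this, Finset.prod_mul_distrib]
        ring
    _ = ∑ m' : Fin N → Fin p, (c m' * ∏ t, u t ^ ((m' t : ℕ))) *
          ∑ a : Fin N → ZMod p, ∏ t, (Wm p (m t) (toFin p (a t)) * a t ^ ((m' t : ℕ))) := by
        rw [Finset.sum_comm]
        exact Finset.sum_congr rfl fun m' _ => (Finset.mul_sum _ _ _).symm
    _ = ∑ m' : Fin N → Fin p, (c m' * ∏ t, u t ^ ((m' t : ℕ))) *
          (if m = m' then 1 else 0) := by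
        apply Finset.sum_congr rfl; intro m' _
        congr 1
        have := Finset.prod_univ_sum (fun _ : Fin N => (Finset.univ : Finset (ZMod p)))
          (fun t k => Wm p (m t) (toFin p k) * k ^ ((m' t : ℕ)))
        rw [Fintype.piFinset_univ] at this
        rw [← this,
          Finset.prod_congr rfl (fun t (_ : t ∈ Finset.univ) => WI2 (m t) (m' t)),
          Finset.prod_boole]
        by_cases h : m = m'
        · subst h; simp
        · rw [if_neg, if_neg h]
          intro hc'
          exact h (funext fun t => hc' t (Finset.mem_univ t))
    _ = c m * ∏ t, u t ^ ((m t : ℕ)) := by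
        simp only [mul_ite, mul_one, mul_zero]
        have : ∀ m' : Fin N → Fin p,
            (if m = m' then c m' * ∏ t, u t ^ ((m' t : ℕ)) else 0)
            = if m' = m then c m' * ∏ t, u t ^ ((m' t : ℕ)) else 0 := by
          intro m'; by_cases h : m = m'
          · subst h; simp
          · rw [if_neg h, if_neg (fun hx => h hx.symm)]
        rw [Finset.sum_congr rfl (fun m' _ => this m'), Finset.sum_ite_eq']
        simp

/-- pointwise decomposition of a separated function into its monomial components -/
lemma decomp_pointwise {n N : ℕ} {g} (hsep : SepOf p q n N g)
    (x : Fin (n + N) → ZMod p × ZMod q) :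
    g x = ∑ m : Fin N → Fin p, Pf p q n N (coef p q n N g m) (fun t => ((m t : ℕ))) x := by
  classical
  obtain ⟨Φ, hΦ⟩ := hsep
  set z : Fin n → ZMod q := fun j => (x (Fin.castAdd N j)).2
  set u : Fin N → ZMod p := fun t => (x (Fin.natAdd n t)).1
  have h2 : ∀ m : Fin N → Fin p,
      Pf p q n N (coef p q n N g m) (fun t => ((m t : ℕ))) x
      = ((∑ a : Fin N → ZMod p, (∏ t, Wm p (m t) (toFin p (a t))) * Φ z a)
          * ∏ t, u t ^ ((m t : ℕ)), 0) := by
    intro m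
    unfold Pf
    rw [coef_eq_of_sep Φ hΦ]
  rw [Finset.sum_congr rfl (fun m _ => h2 m), hΦ x]
  apply Prod.ext
  · rw [Prod.fst_sum]
    simp only
    exact (master (Φ z) u).symm
  · rw [Prod.snd_sum]
    simp

/-! CRT scalars -/

def crt (cop : Nat.Coprime p q) (a b : ℕ) : ℕ := (Nat.chineseRemainder cop a b).1

lemma crt_p (cop : Nat.Coprime p q) (a b : ℕ) :
    ((crt cop a b : ℕ) : ZMod p) = (a : ZMod p) :=
  (ZMod.natCast_eq_natCast_iff _ _ _).mpr (Nat.chineseRemainder cop a b).2.1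

lemma crt_q (cop : Nat.Coprime p q) (a b : ℕ) :
    ((crt cop a b : ℕ) : ZMod q) = (b : ZMod q) :=
  (ZMod.natCast_eq_natCast_iff _ _ _).mpr (Nat.chineseRemainder cop a b).2.2

lemma crt_smul (cop : Nat.Coprime p q) (a b : ℕ) (y : ZMod p × ZMod q) :
    (crt cop a b) • y = ((a : ZMod p) * y.1, (b : ZMod q) * y.2) := by
  apply Prod.ext
  · rw [Prod.smul_fst, nsmul_eq_mul, crt_p]
  · rw [Prod.smul_snd, nsmul_eq_mul, crt_q]

lemma val_natCast_self {a : ZMod p} :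
    ((a.val : ℕ) : ZMod p) = a := by
  haveI : NeZero p := ⟨(Fact.out : p.Prime).ne_zero⟩
  exact ZMod.natCast_rightInverse a

/-- Extraction of a monomial component stays in the clone. -/
lemma extract_mem {K : ∀ n : ℕ, Set ((Fin n → ZMod p × ZMod q) → ZMod p × ZMod q)}
    (hK : IsClone' K) (hadd : (fun x : Fin 2 → ZMod p × ZMod q => x 0 + x 1) ∈ K 2)
    (cop : Nat.Coprime p q) {n N : ℕ}
    {g : (Fin (n+N) → ZMod p × ZMod q) → ZMod p × ZMod q}
    (hg : g ∈ K (n+N)) (hsep : SepOf p q n N g) (m : Fin N → Fin p) :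
    Pf p q n N (coef p q n N g m) (fun t => ((m t : ℕ))) ∈ K (n + N) := by
  classical
  obtain ⟨Φ, hΦ⟩ := hsep
  set wgt : (Fin N → ZMod p) → ℕ :=
    fun a => crt cop (∏ t, Wm p (m t) (toFin p (a t))).val 0 with hwgt
  set sca : ZMod p → ℕ := fun α => crt cop α.val 1 with hsca
  set sub : (Fin N → ZMod p) → ∀ _ : Fin (n+N),
      ((Fin (n+N) → ZMod p × ZMod q) → ZMod p × ZMod q) :=
    fun a => Fin.addCases (fun j x => x (Fin.castAdd N j))
      (fun t x => (sca (a t)) • x (Fin.natAdd n t)) with hsub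
  have hsubmem : ∀ a i, sub a i ∈ K (n+N) := by
    intro a i
    induction i using Fin.addCases with
    | left j => rw [hsub]; simp only [Fin.addCases_left]; exact proj_mem hK _ _
    | right t =>
      rw [hsub]; simp only [Fin.addCases_right]
      exact smul_mem hK hadd (proj_mem hK _ _) _
  have hF : (fun x => ∑ a : Fin N → ZMod p, (wgt a) • g (fun i => sub a i x)) ∈ K (n+N) := by
    apply sum_mem hK hadd hg
    intro a _
    exact smul_mem hK hadd (comp_mem hK hg (hsubmem a)) (wgt a)
  have heq : (fun x => ∑ a : Fin N → ZMod p, (wgt a) • g (fun i => sub a i x))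
      = Pf p q n N (coef p q n N g m) (fun t => ((m t : ℕ))) := by
    funext x
    set z : Fin n → ZMod q := fun j => (x (Fin.castAdd N j)).2
    set u : Fin N → ZMod p := fun t => (x (Fin.natAdd n t)).1
    have hterm : ∀ a : Fin N → ZMod p,
        (wgt a) • g (fun i => sub a i x)
        = ((∏ t, Wm p (m t) (toFin p (a t))) * Φ z (fun t => a t * u t), 0) := by
      intro a
      have hgy : g (fun i => sub a i x) = (Φ z (fun t => a t * u t), 0) := by
        rw [hΦ]
        congr 1
        congr 1
        · funext j; rw [hsub]; simp [Fin.addCases_left]; rfl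
        · funext t; rw [hsub]; simp only [Fin.addCases_right]
          rw [hsca]
          simp only [crt_smul]
          rw [val_natCast_self]
      rw [hgy, hwgt, crt_smul]
      simp [val_natCast_self]
    rw [Finset.sum_congr rfl (fun a _ => hterm a)]
    apply Prod.ext
    · rw [Prod.fst_sum]
      simp only
      rw [ext_identity (Φ z) m u]
      show _ = coef p q n N g m z * ∏ t, u t ^ ((m t :ℕ))
      rw [coef_eq_of_sep Φ hΦ]
    · rw [Prod.snd_sum]; simp [Pf]
  rw [heq] at hF
  exact hF

/-- delta lemma : extraction of a monomial -/
lemma coef_Pf {n N : ℕ} (c : (Fin n → ZMod q) → ZMod p) (mv : Fin N → ℕ)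
    (hmv : ∀ t, mv t < p) (m : Fin N → Fin p) :
    coef p q n N (Pf p q n N c mv) m
      = if (∀ t, ((m t : ℕ)) = mv t) then c else 0 := by
  classical
  funext z
  unfold coef Pf
  have hemb1 : ∀ (a : Fin N → ZMod p) (j : Fin n),
      ((emb p q n N z a) (Fin.castAdd N j)).2 = z j := by
    intro a j; unfold emb; simp [Fin.addCases_left]
  have hemb2 : ∀ (a : Fin N → ZMod p) (t : Fin N),
      ((emb p q n N z a) (Fin.natAdd n t)).1 = a t := by
    intro a t; unfold emb; simp [Fin.addCases_right]
  have h1 : ∀ a : Fin N → ZMod p,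
      (∏ t, Wm p (m t) (toFin p (a t))) *
        ((c fun j => ((emb p q n N z a) (Fin.castAdd N j)).2) *
          ∏ t, ((emb p q n N z a) (Fin.natAdd n t)).1 ^ mv t, (0:ZMod q)).1
      = c z * ∏ t, (Wm p (m t) (toFin p (a t)) * a t ^ mv t) := by
    intro a
    simp only [hemb1, hemb2]
    rw [Finset.prod_mul_distrib]
    ring
  rw [Finset.sum_congr rfl (fun a _ => h1 a), ← Finset.mul_sum]
  have := Finset.prod_univ_sum (fun _ : Fin N => (Finset.univ : Finset (ZMod p)))
    (fun t k => Wm p (m t) (toFin p k) * k ^ mv t)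
  rw [Fintype.piFinset_univ] at this
  rw [← this]
  have h2 : ∀ t : Fin N, (∑ k : ZMod p, Wm p (m t) (toFin p k) * k ^ mv t)
      = if m t = (⟨mv t, hmv t⟩ : Fin p) then 1 else 0 := by
    intro t
    have := WI2 (m t) (⟨mv t, hmv t⟩ : Fin p)
    simpa using this
  rw [Finset.prod_congr rfl (fun t _ => h2 t), Finset.prod_boole]
  by_cases h : ∀ t, ((m t : ℕ)) = mv t
  · rw [if_pos h, if_pos, mul_one]
    intro t _
    exact Fin.ext (h t)
  · rw [if_neg h, if_neg, mul_zero]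
    · simp
    · intro hc
      exact h (fun t => congrArg Fin.val (hc t (Finset.mem_univ t)))

lemma coef_sum {n N : ℕ} {ι : Type*} (s : Finset ι)
    (G : ι → (Fin (n+N) → ZMod p × ZMod q) → ZMod p × ZMod q) (m : Fin N → Fin p) :
    coef p q n N (fun x => ∑ i ∈ s, G i x) m
      = fun z => ∑ i ∈ s, coef p q n N (G i) m z := by
  funext z
  unfold coef
  have : ∀ a : Fin N → ZMod p,
      (∏ t, Wm p (m t) (toFin p (a t))) * ((∑ i ∈ s, G i (emb p q n N z a)).1)
      = ∑ i ∈ s, (∏ t, Wm p (m t) (toFin p (a t))) * (G i (emb p q n N z a)).1 := by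
    intro a
    rw [Prod.fst_sum, Finset.mul_sum]
  rw [Finset.sum_congr rfl (fun a _ => this a), Finset.sum_comm]

lemma coef_smul {n N : ℕ} (k : ℕ)
    (g : (Fin (n+N) → ZMod p × ZMod q) → ZMod p × ZMod q) (m : Fin N → Fin p) :
    coef p q n N (fun x => k • g x) m = fun z => k • coef p q n N g m z := by
  funext z
  unfold coef
  rw [Finset.smul_sum]
  apply Finset.sum_congr rfl
  intro a _
  rw [Prod.smul_fst, nsmul_eq_mul, nsmul_eq_mul]
  ring

/-! ### Part 3: single-variable polarization -/

lemma sv_step {K : ∀ n : ℕ, Set ((Fin n → ZMod p × ZMod q) → ZMod p × ZMod q)}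
    (hK : IsClone' K) (hadd : (fun x : Fin 2 → ZMod p × ZMod q => x 0 + x 1) ∈ K 2)
    (cop : Nat.Coprime p q) {n N : ℕ} {c : (Fin n → ZMod q) → ZMod p} {m : Fin N → ℕ}
    (hm : ∀ t, m t < p) (j₀ : Fin N) (he : 2 ≤ m j₀)
    (h : Pf p q n N c m ∈ K (n+N)) :
    Pf p q n (N+1) c (Fin.snoc (Function.update m j₀ (m j₀ - 1)) 1) ∈ K (n+(N+1)) := by
  classical
  have hp2 : 2 ≤ p := (Fact.out : p.Prime).two_le
  set e := m j₀ with hedef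
  -- the inflated function F
  set sub : ∀ _ : Fin (n+N), ((Fin (n+(N+1)) → ZMod p × ZMod q) → ZMod p × ZMod q) :=
    Fin.addCases (fun j x => x (Fin.castAdd (N+1) j))
      (fun t x => if t = j₀ then
          x (Fin.natAdd n t.castSucc) + x (Fin.natAdd n (Fin.last N))
        else x (Fin.natAdd n t.castSucc)) with hsub
  have hsubmem : ∀ i, sub i ∈ K (n+(N+1)) := by
    intro i
    induction i using Fin.addCases with
    | left j => rw [hsub]; simp only [Fin.addCases_left]; exact proj_mem hK _ _
    | right t =>
      rw [hsub]; simp only [Fin.addCases_right]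
      by_cases ht : t = j₀
      · simp only [ht, if_pos rfl]
        exact add_mem hK hadd (proj_mem hK _ _) (proj_mem hK _ _)
      · simp only [if_neg ht]
        exact proj_mem hK _ _
  set F : (Fin (n+(N+1)) → ZMod p × ZMod q) → ZMod p × ZMod q :=
    fun x => Pf p q n N c m (fun i => sub i x) with hF
  have hFmem : F ∈ K (n+(N+1)) := comp_mem hK h hsubmem
  -- pointwise formula for F
  have hFval : ∀ x, F x = (c (fun j => (x (Fin.castAdd (N+1) j)).2) *
      ∏ t : Fin N, (if t = j₀ then
          (x (Fin.natAdd n t.castSucc)).1 + (x (Fin.natAdd n (Fin.last N))).1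
        else (x (Fin.natAdd n t.castSucc)).1) ^ m t, 0) := by
    intro x
    rw [hF]
    unfold Pf
    simp only []
    have h1 : (fun j : Fin n => (sub (Fin.castAdd N j) x).2)
        = fun j => (x (Fin.castAdd (N+1) j)).2 := by
      funext j; rw [hsub]; simp [Fin.addCases_left]
    have h2 : ∀ t : Fin N, (sub (Fin.natAdd n t) x).1
        = (if t = j₀ then (x (Fin.natAdd n t.castSucc)).1 +
            (x (Fin.natAdd n (Fin.last N))).1
          else (x (Fin.natAdd n t.castSucc)).1) := by
      intro t; rw [hsub]; simp only [Fin.addCases_right]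
      by_cases ht : t = j₀ <;> simp [ht]
    apply Prod.ext
    · simp only
      rw [h1]
      congr 1
      exact Finset.prod_congr rfl fun t _ => by rw [h2 t]
    · rfl
  have hsepF : SepOf p q n (N+1) F :=
    ⟨fun z u => c z * ∏ t : Fin N, (if t = j₀ then u t.castSucc + u (Fin.last N)
        else u t.castSucc) ^ m t, hFval⟩
  -- expansion of F as a sum of monomials
  set mk : ℕ → (Fin (N+1) → ℕ) :=
    fun k => Fin.snoc (Function.update m j₀ k) (e - k) with hmk
  have hFsum : F = fun x => ∑ k ∈ Finset.range (e+1),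
      (e.choose k) • Pf p q n (N+1) c (mk k) x := by
    funext x
    rw [hFval x]
    set z := fun j => (x (Fin.castAdd (N+1) j)).2
    set u := fun s : Fin (N+1) => (x (Fin.natAdd n s)).1
    have hterm : ∀ k, Pf p q n (N+1) c (mk k) x
        = (c z * ((u (Fin.last N)) ^ (e - k) *
            ∏ t : Fin N, (u t.castSucc) ^ (Function.update m j₀ k t)), 0) := by
      intro k
      unfold Pf
      congr 1
      rw [Fin.prod_univ_castSucc]
      simp only [hmk, Fin.snoc_castSucc, Fin.snoc_last]
      ring
    have hprod : (∏ t : Fin N, (if t = j₀ then u t.castSucc + u (Fin.last N)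
        else u t.castSucc) ^ m t)
        = (∏ t ∈ Finset.univ.erase j₀, (u t.castSucc) ^ m t) *
            (u j₀.castSucc + u (Fin.last N)) ^ e := by
      rw [← Finset.prod_erase_mul _ _ (Finset.mem_univ j₀)]
      congr 1
      · apply Finset.prod_congr rfl
        intro t ht
        rw [if_neg (Finset.ne_of_mem_erase ht)]
      · rw [if_pos rfl]
    have hupdate : ∀ k, (∏ t : Fin N, (u t.castSucc) ^ (Function.update m j₀ k t))
        = (u j₀.castSucc) ^ k * ∏ t ∈ Finset.univ.erase j₀, (u t.castSucc) ^ m t := by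
      intro k
      have h1 : ∀ t : Fin N, (u t.castSucc) ^ (Function.update m j₀ k t)
          = Function.update (fun t : Fin N => (u t.castSucc) ^ m t) j₀
              ((u j₀.castSucc) ^ k) t := by
        intro t
        by_cases ht : t = j₀
        · subst ht; simp
        · simp [Function.update_apply, ht]
      rw [Finset.prod_congr rfl (fun t _ => h1 t), Finset.prod_update_of_mem (Finset.mem_univ j₀)]
      rw [Finset.erase_eq]
    apply Prod.ext
    · rw [Prod.fst_sum]
      simp only [hterm]
      change c z * ∏ t : Fin N, (if t = j₀ then u t.castSucc + u (Fin.last N)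
        else u t.castSucc) ^ m t = _
      rw [hprod]
      rw [add_pow]
      rw [Finset.mul_sum, Finset.mul_sum]
      apply Finset.sum_congr rfl
      intro k hk
      rw [hupdate k]
      rw [Prod.smul_fst]
      rw [nsmul_eq_mul]
      ring
    · rw [Prod.snd_sum]
      simp [hterm]
  -- extraction pattern
  have hboundlast : e - (e-1) < p := by omega
  have hbound : ∀ s : Fin (N+1), mk (e-1) s < p := by
    intro s
    induction s using Fin.lastCases with
    | last => rw [hmk]; simpa using hboundlast
    | cast t =>
      rw [hmk]; simp only [Fin.snoc_castSucc]
      by_cases ht : t = j₀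
      · rw [ht, Function.update_self]; have := hm j₀; omega
      · rw [Function.update_of_ne ht]; exact hm t
  set m₂ : Fin (N+1) → Fin p := fun s => ⟨mk (e-1) s, hbound s⟩ with hm₂
  have hext := extract_mem hK hadd cop hFmem hsepF m₂
  -- compute the coefficient
  have hcoef : coef p q n (N+1) F m₂ = fun z => e • c z := by
    rw [hFsum, coef_sum]
    funext z
    have hterm : ∀ k ∈ Finset.range (e+1),
        coef p q n (N+1) (fun x => (e.choose k) • Pf p q n (N+1) c (mk k) x) m₂ z
        = (e.choose k) • ((if (∀ s, ((m₂ s : ℕ)) = mk k s) then c else 0) z) := by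
      intro k hk
      rw [coef_smul]
      have hmvk : ∀ s : Fin (N+1), mk k s < p := by
        intro s
        induction s using Fin.lastCases with
        | last =>
          rw [hmk]; simp only [Fin.snoc_last]
          have h1 := Finset.mem_range.mp hk
          have h2 := hm j₀
          omega
        | cast t =>
          rw [hmk]; simp only [Fin.snoc_castSucc]
          by_cases ht : t = j₀
          · rw [ht, Function.update_self]
            have h1 := Finset.mem_range.mp hk
            have h2 := hm j₀
            omega
          · rw [Function.update_of_ne ht]; exact hm t
      rw [coef_Pf _ _ hmvk m₂]
    rw [Finset.sum_congr rfl hterm]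
    rw [Finset.sum_eq_single (e-1)]
    · have hcond : (∀ s, ((m₂ s : ℕ)) = mk (e-1) s) := fun s => rfl
      rw [if_pos hcond]
      have : e.choose (e-1) = e := by
        have h1 : e.choose (e - 1) = e.choose 1 := by
          have := Nat.choose_symm (show 1 ≤ e by omega) (n := e)
          simpa using this
        rw [h1, Nat.choose_one_right]
      simp [this]
    · intro k hk hkne
      have hcond : ¬ (∀ s, ((m₂ s : ℕ)) = mk k s) := by
        intro hc
        have := hc (Fin.last N)
        rw [hm₂] at this
        simp only [hmk, Fin.snoc_last] at this
        have hkle := Finset.mem_range.mp hk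
        omega
      rw [if_neg hcond]
      simp
    · intro hne
      exact absurd (Finset.mem_range.mpr (by omega)) hne
  rw [hcoef] at hext
  -- rescale by the inverse of e
  have hcast_ne : ((e : ℕ) : ZMod p) ≠ 0 := by
    intro h0
    have : ((e : ℕ) : ZMod p).val = 0 := by rw [h0]; simp
    rw [ZMod.val_cast_of_lt (hm j₀)] at this
    omega
  set kinv : ℕ := (((e : ℕ) : ZMod p)⁻¹).val with hkinv
  have hkinv_cast : ((kinv : ℕ) : ZMod p) = ((e : ℕ) : ZMod p)⁻¹ := val_natCast_self
  have hscaled := smul_mem hK hadd hext kinv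
  have hfinal : (fun x => kinv • Pf p q n (N+1) (fun z => e • c z) (fun s => ((m₂ s : ℕ))) x)
      = Pf p q n (N+1) c (Fin.snoc (Function.update m j₀ (m j₀ - 1)) 1) := by
    funext x
    have hmvals : (fun s => ((m₂ s : ℕ))) = Fin.snoc (Function.update m j₀ (m j₀ - 1)) 1 := by
      funext s
      rw [hm₂]
      show mk (e-1) s = _
      rw [hmk]
      induction s using Fin.lastCases with
      | last => simp; omega
      | cast t => simp [hedef]
    rw [hmvals]
    apply Prod.ext
    · rw [Prod.smul_fst]
      have hsc : ∀ a b : ZMod p, kinv • ((e • a) * b) = a * b := by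
        intro a b
        rw [nsmul_eq_mul, nsmul_eq_mul, hkinv_cast, ← mul_assoc, ← mul_assoc,
          inv_mul_cancel₀ hcast_ne, one_mul]
      exact hsc _ _
    · rw [Prod.smul_snd]
      exact smul_zero kinv
  rw [hfinal] at hscaled
  exact hscaled

/-! ### Part 4: flattening, degree reduction and boosting -/

lemma flat_base {K : ∀ n : ℕ, Set ((Fin n → ZMod p × ZMod q) → ZMod p × ZMod q)}
    (hK : IsClone' K) {n N : ℕ} {m : Fin N → ℕ} {c : (Fin n → ZMod q) → ZMod p}
    (hm1 : ∀ t, m t ≤ 1) (h0 : N = 0 ∨ 0 < n + ∑ t, m t)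
    (h : Pf p q n N c m ∈ K (n+N)) :
    Pf p q n (∑ t, m t) c (fun _ => 1) ∈ K (n + ∑ t, m t) := by
  classical
  rcases h0 with h0 | hpos
  · subst h0
    have hs : (∑ t : Fin 0, m t) = 0 := by simp
    rw [hs]
    have hmeq : (fun _ : Fin 0 => 1) = m := funext fun t => t.elim0
    rw [hmeq]
    exact h
  · set d := ∑ t, m t with hd
    set E : (Σ t : Fin N, Fin (m t)) ≃ Fin d :=
      Fintype.equivFinOfCardEq (by simp [Fintype.card_sigma, hd]) with hE
    set sub : ∀ _ : Fin (n+N), ((Fin (n+d) → ZMod p × ZMod q) → ZMod p × ZMod q) :=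
      Fin.addCases (fun j x => x (Fin.castAdd d j))
        (fun t x => if h' : 0 < m t then x (Fin.natAdd n (E ⟨t, ⟨0, h'⟩⟩))
          else x (⟨0, hpos⟩ : Fin (n+d))) with hsub
    have hsubmem : ∀ i, sub i ∈ K (n+d) := by
      intro i
      induction i using Fin.addCases with
      | left j => rw [hsub]; simp only [Fin.addCases_left]; exact proj_mem hK _ _
      | right t =>
        rw [hsub]; simp only [Fin.addCases_right]
        by_cases h' : 0 < m t
        · simp only [dif_pos h']; exact proj_mem hK _ _
        · simp only [dif_neg h']; exact proj_mem hK _ _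
    have hcomp := comp_mem hK h hsubmem
    have heq : (fun x => Pf p q n N c m (fun i => sub i x))
        = Pf p q n d c (fun _ => 1) := by
      funext x
      unfold Pf
      simp only []
      have h1 : (fun j : Fin n => (sub (Fin.castAdd N j) x).2)
          = fun j => (x (Fin.castAdd d j)).2 := by
        funext j; rw [hsub]; simp [Fin.addCases_left]
      rw [h1]
      apply Prod.ext
      · simp only
        congr 1
        have hR : (∏ s : Fin d, (x (Fin.natAdd n s)).1 ^ (1:ℕ))
            = ∏ σ : Σ t : Fin N, Fin (m t), (x (Fin.natAdd n (E σ))).1 := by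
          rw [← Equiv.prod_comp E (fun s => (x (Fin.natAdd n s)).1 ^ (1:ℕ))]
          simp [pow_one]
        rw [hR, ← Finset.univ_sigma_univ, Finset.prod_sigma]
        apply Finset.prod_congr rfl
        intro t _
        rw [hsub]; simp only [Fin.addCases_right]
        rcases Nat.le_one_iff_eq_zero_or_eq_one.mp (hm1 t) with hmt | hmt
        · haveI : IsEmpty (Fin (m t)) := by rw [hmt]; infer_instance
          rw [Finset.univ_eq_empty, Finset.prod_empty]
          rw [dif_neg (by omega : ¬ 0 < m t)]
          rw [hmt, pow_zero]
        · have hpos' : 0 < m t := by omega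
          have hpow : ∀ y : ZMod p, y ^ m t = y := by intro y; rw [hmt, pow_one]
          rw [dif_pos hpos', hpow]
          symm
          apply Finset.prod_eq_single (⟨0, hpos'⟩ : Fin (m t))
          · intro b _ hb
            exact absurd (Fin.ext (by have := b.isLt; omega)) hb
          · intro hnot
            exact absurd (Finset.mem_univ _) hnot
      · rfl
    rw [heq] at hcomp
    exact hcomp

lemma unflat {K : ∀ n : ℕ, Set ((Fin n → ZMod p × ZMod q) → ZMod p × ZMod q)}
    (hK : IsClone' K) {n N : ℕ} {m : Fin N → ℕ} {c : (Fin n → ZMod q) → ZMod p}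
    (h : Pf p q n (∑ t, m t) c (fun _ => 1) ∈ K (n + ∑ t, m t)) :
    Pf p q n N c m ∈ K (n+N) := by
  classical
  set d := ∑ t, m t with hd
  set E : (Σ t : Fin N, Fin (m t)) ≃ Fin d :=
    Fintype.equivFinOfCardEq (by simp [Fintype.card_sigma, hd]) with hE
  set sub : ∀ _ : Fin (n+d), ((Fin (n+N) → ZMod p × ZMod q) → ZMod p × ZMod q) :=
    Fin.addCases (fun j x => x (Fin.castAdd N j))
      (fun s x => x (Fin.natAdd n (E.symm s).1)) with hsub
  have hsubmem : ∀ i, sub i ∈ K (n+N) := by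
    intro i
    induction i using Fin.addCases with
    | left j => rw [hsub]; simp only [Fin.addCases_left]; exact proj_mem hK _ _
    | right s => rw [hsub]; simp only [Fin.addCases_right]; exact proj_mem hK _ _
  have hcomp := comp_mem hK h hsubmem
  have heq : (fun x => Pf p q n d c (fun _ => 1) (fun i => sub i x))
      = Pf p q n N c m := by
    funext x
    unfold Pf
    simp only []
    have h1 : (fun j : Fin n => (sub (Fin.castAdd d j) x).2)
        = fun j => (x (Fin.castAdd N j)).2 := by
      funext j; rw [hsub]; simp [Fin.addCases_left]
    rw [h1]
    apply Prod.ext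
    · simp only
      congr 1
      have h2 : (∏ s : Fin d, (sub (Fin.natAdd n s) x).1 ^ (1:ℕ))
          = ∏ s : Fin d, (x (Fin.natAdd n (E.symm s).1)).1 := by
        apply Finset.prod_congr rfl
        intro s _
        rw [hsub]; simp [Fin.addCases_right]
      rw [h2, ← Equiv.prod_comp E (fun s => (x (Fin.natAdd n (E.symm s).1)).1)]
      have h3 : ∀ σ : Σ t : Fin N, Fin (m t),
          (x (Fin.natAdd n (E.symm (E σ)).1)).1 = (x (Fin.natAdd n σ.1)).1 := by
        intro σ; rw [Equiv.symm_apply_apply]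
      rw [Finset.prod_congr rfl (fun σ _ => h3 σ), ← Finset.univ_sigma_univ,
        Finset.prod_sigma]
      apply Finset.prod_congr rfl
      intro t _
      have hc : (∏ _s : Fin (m t), (x (Fin.natAdd n t)).1) = (x (Fin.natAdd n t)).1 ^ m t := by
        rw [Finset.prod_const, Finset.card_univ, Fintype.card_fin]
      rw [← hc]
    · rfl
  rw [heq] at hcomp
  exact hcomp

/-- flattening: from a monomial with multiplicities to the multilinear monomial -/
lemma flat {K : ∀ n : ℕ, Set ((Fin n → ZMod p × ZMod q) → ZMod p × ZMod q)}
    (hK : IsClone' K) (hadd : (fun x : Fin 2 → ZMod p × ZMod q => x 0 + x 1) ∈ K 2)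
    (cop : Nat.Coprime p q) {n : ℕ} :
    ∀ (T N : ℕ) (m : Fin N → ℕ) (c : (Fin n → ZMod q) → ZMod p),
    (∀ t, m t < p) → (∑ t, (m t - 1)) ≤ T → (N = 0 ∨ 0 < n + ∑ t, m t) →
    Pf p q n N c m ∈ K (n+N) →
    Pf p q n (∑ t, m t) c (fun _ => 1) ∈ K (n + ∑ t, m t) := by
  intro T
  induction T with
  | zero =>
    intro N m c hm hT h0 h
    have hm1 : ∀ t, m t ≤ 1 := by
      intro t
      have := Finset.sum_eq_zero_iff.mp (Nat.le_zero.mp hT) t (Finset.mem_univ t)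
      omega
    exact flat_base hK hm1 h0 h
  | succ T ih =>
    intro N m c hm hT h0 h
    by_cases hex : (∑ t, (m t - 1)) = 0
    · have hm1 : ∀ t, m t ≤ 1 := by
        intro t
        have := Finset.sum_eq_zero_iff.mp hex t (Finset.mem_univ t)
        omega
      exact flat_base hK hm1 h0 h
    · obtain ⟨j₀, _, hj₀⟩ := Finset.exists_ne_zero_of_sum_ne_zero hex
      have he : 2 ≤ m j₀ := by omega
      have hsv := sv_step hK hadd cop hm j₀ he h
      set m₂ : Fin (N+1) → ℕ := Fin.snoc (Function.update m j₀ (m j₀ - 1)) 1 with hm₂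
      have hm₂lt : ∀ t, m₂ t < p := by
        intro t
        induction t using Fin.lastCases with
        | last =>
          rw [hm₂]; simp only [Fin.snoc_last]
          exact lt_of_lt_of_le Nat.one_lt_two (Fact.out : p.Prime).two_le
        | cast t =>
          rw [hm₂]; simp only [Fin.snoc_castSucc]
          by_cases ht : t = j₀
          · rw [ht, Function.update_self]; have := hm j₀; omega
          · rw [Function.update_of_ne ht]; exact hm t
      have hsplit : ∀ (f : Fin N → ℕ), (∑ t, f t) = f j₀ + ∑ t ∈ Finset.univ.erase j₀, f t := by
        intro f
        rw [add_comm, Finset.sum_erase_add _ _ (Finset.mem_univ j₀)]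
      have hupds : ∀ (k : ℕ), (∑ t, Function.update m j₀ k t)
          = k + ∑ t ∈ Finset.univ.erase j₀, m t := by
        intro k
        rw [hsplit (Function.update m j₀ k), Function.update_self]
        congr 1
        apply Finset.sum_congr rfl
        intro t ht
        rw [Function.update_of_ne (Finset.ne_of_mem_erase ht)]
      have hsum₂ : (∑ t, m₂ t) = ∑ t, m t := by
        rw [hm₂, Fin.sum_univ_castSucc]
        simp only [Fin.snoc_castSucc, Fin.snoc_last]
        rw [hupds, hsplit m]
        omega
      have hexc₂ : (∑ t, (m₂ t - 1)) ≤ T := by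
        have h1 : (∑ t, (m₂ t - 1)) = (∑ t : Fin N, (m₂ t.castSucc - 1)) + (m₂ (Fin.last N) - 1) :=
          Fin.sum_univ_castSucc _
        have h1b : ∀ t : Fin N, m₂ t.castSucc = Function.update m j₀ (m j₀ - 1) t := by
          intro t; rw [hm₂]; simp
        have h1c : m₂ (Fin.last N) = 1 := by rw [hm₂]; simp
        rw [h1, h1c, Finset.sum_congr rfl (fun t (_ : t ∈ Finset.univ) => by rw [h1b t])]
        have h2 : (∑ t : Fin N, (Function.update m j₀ (m j₀ - 1) t - 1))
            = (m j₀ - 1 - 1) + ∑ t ∈ Finset.univ.erase j₀, (m t - 1) := by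
          rw [hsplit (fun t => Function.update m j₀ (m j₀ - 1) t - 1), Function.update_self]
          congr 1
          apply Finset.sum_congr rfl
          intro t ht
          rw [Function.update_of_ne (Finset.ne_of_mem_erase ht)]
        have h3 : (∑ t, (m t - 1)) = (m j₀ - 1) + ∑ t ∈ Finset.univ.erase j₀, (m t - 1) := by
          rw [hsplit (fun t => m t - 1)]
        omega
      have h0₂ : (N+1 = 0 ∨ 0 < n + ∑ t, m₂ t) := by
        right
        rw [hsum₂]
        rcases h0 with h0 | h0
        · exact (Fin.cast h0 j₀).elim0
        · exact h0
      have := ih (N+1) m₂ c hm₂lt hexc₂ h0₂ hsv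
      rw [hsum₂] at this
      exact this

/-! ### degree reduction x^p = x -/

lemma reduce' {K : ∀ n : ℕ, Set ((Fin n → ZMod p × ZMod q) → ZMod p × ZMod q)}
    (hK : IsClone' K) {n D : ℕ} {c : (Fin n → ZMod q) → ZMod p}
    (h : Pf p q n (D + p) c (fun _ => 1) ∈ K (n + (D + p))) :
    Pf p q n (D + 1) c (fun _ => 1) ∈ K (n + (D + 1)) := by
  classical
  set red : Fin (D + p) → Fin (D + 1) :=
    fun t => if h' : (t : ℕ) < D then ⟨t, by omega⟩ else ⟨D, by omega⟩ with hred
  set sub : ∀ _ : Fin (n+(D+p)), ((Fin (n+(D+1)) → ZMod p × ZMod q) → ZMod p × ZMod q) :=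
    Fin.addCases (fun j x => x (Fin.castAdd (D+1) j))
      (fun t x => x (Fin.natAdd n (red t))) with hsub
  have hsubmem : ∀ i, sub i ∈ K (n+(D+1)) := by
    intro i
    induction i using Fin.addCases with
    | left j => rw [hsub]; simp only [Fin.addCases_left]; exact proj_mem hK _ _
    | right t => rw [hsub]; simp only [Fin.addCases_right]; exact proj_mem hK _ _
  have hcomp := comp_mem hK h hsubmem
  have heq : (fun x => Pf p q n (D+p) c (fun _ => 1) (fun i => sub i x))
      = Pf p q n (D+1) c (fun _ => 1) := by
    funext x
    unfold Pf
    simp only []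
    have h1 : (fun j : Fin n => (sub (Fin.castAdd (D+p) j) x).2)
        = fun j => (x (Fin.castAdd (D+1) j)).2 := by
      funext j; rw [hsub]; simp [Fin.addCases_left]
    rw [h1]
    apply Prod.ext
    · simp only
      congr 1
      have h2 : (∏ t : Fin (D+p), (sub (Fin.natAdd n t) x).1 ^ (1:ℕ))
          = ∏ t : Fin (D+p), (x (Fin.natAdd n (red t))).1 := by
        apply Finset.prod_congr rfl
        intro t _
        rw [hsub]; simp [Fin.addCases_right]
      rw [h2, Fin.prod_univ_add (fun t : Fin (D+p) => (x (Fin.natAdd n (red t))).1)]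
      have h3 : ∀ t : Fin D, red (Fin.castAdd p t) = Fin.castSucc t := by
        intro t
        rw [hred]
        simp only []
        have hlt : ((Fin.castAdd p t : Fin (D+p)) : ℕ) < D := by simp [t.isLt]
        rw [dif_pos hlt]
        apply Fin.ext
        simp
      have h4 : ∀ s : Fin p, red (Fin.natAdd D s) = Fin.last D := by
        intro s
        rw [hred]
        simp only []
        have hlt : ¬ ((Fin.natAdd D s : Fin (D+p)) : ℕ) < D := by simp
        rw [dif_neg hlt]
        apply Fin.ext
        simp [Fin.last]
      have hA : (∏ t : Fin D, (x (Fin.natAdd n (red (Fin.castAdd p t)))).1)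
          = ∏ t : Fin D, (x (Fin.natAdd n t.castSucc)).1 :=
        Finset.prod_congr rfl (fun t _ => by rw [h3 t])
      have hB : (∏ s : Fin p, (x (Fin.natAdd n (red (Fin.natAdd D s)))).1)
          = (x (Fin.natAdd n (Fin.last D))).1 ^ p :=
        calc (∏ s : Fin p, (x (Fin.natAdd n (red (Fin.natAdd D s)))).1)
            = ∏ _s : Fin p, (x (Fin.natAdd n (Fin.last D))).1 :=
              Finset.prod_congr rfl (fun s _ => by rw [h4 s])
          _ = _ := by rw [Finset.prod_const, Finset.card_univ, Fintype.card_fin]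
      rw [hA, hB, ZMod.pow_card]
      rw [Fin.prod_univ_castSucc (fun s : Fin (D+1) => (x (Fin.natAdd n s)).1 ^ (1:ℕ))]
      simp [pow_one]
    · rfl
  rw [heq] at hcomp
  exact hcomp

lemma redChain {K : ∀ n : ℕ, Set ((Fin n → ZMod p × ZMod q) → ZMod p × ZMod q)}
    (hK : IsClone' K) {n : ℕ} {c : (Fin n → ZMod q) → ZMod p} :
    ∀ (R d₀ : ℕ), 1 ≤ d₀ →
    Pf p q n (d₀ + (p-1)*R) c (fun _ => 1) ∈ K (n + (d₀ + (p-1)*R)) →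
    Pf p q n d₀ c (fun _ => 1) ∈ K (n + d₀) := by
  intro R
  induction R with
  | zero =>
    intro d₀ _ h
    rw [Nat.mul_zero, Nat.add_zero] at h
    exact h
  | succ R ih =>
    intro d₀ hd₀ h
    have hp2 : 2 ≤ p := (Fact.out : p.Prime).two_le
    rw [Nat.mul_succ] at h
    obtain ⟨a, ha⟩ : ∃ a, (p-1)*R = a := ⟨_, rfl⟩
    rw [ha] at h
    have key : d₀ + (a + (p-1)) = (d₀ + a - 1) + p := by omega
    rw [key] at h
    have h2 := reduce' hK h
    rw [show (d₀ + a - 1) + 1 = d₀ + a by omega] at h2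
    rw [← ha] at h2
    exact ih d₀ hd₀ h2

def dstar (p d : ℕ) : ℕ := if d ≤ p then d else (d - 2) % (p-1) + 2

lemma dstar_le (hp2 : 2 ≤ p) (d : ℕ) : dstar p d ≤ p := by
  unfold dstar
  split
  · omega
  · have := Nat.mod_lt (d-2) (show 0 < p-1 by omega)
    omega

lemma dstar_spec (hp2 : 2 ≤ p) (d : ℕ) : ∃ R, d = dstar p d + (p-1)*R := by
  unfold dstar
  split
  · exact ⟨0, by omega⟩
  · refine ⟨(d-2)/(p-1), ?_⟩
    have h := Nat.div_add_mod (d-2) (p-1)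
    generalize hX : (p-1) * ((d-2)/(p-1)) = X at h ⊢
    omega

lemma dstar_ge2 {d : ℕ} (hd : p < d) : 2 ≤ dstar p d := by
  unfold dstar
  split
  · omega
  · omega

/-! ### degree boosting -/

lemma step' {K : ∀ n : ℕ, Set ((Fin n → ZMod p × ZMod q) → ZMod p × ZMod q)}
    (hK : IsClone' K) {n D E : ℕ} {b c : (Fin n → ZMod q) → ZMod p}
    (hb : Pf p q n (D+1) b (fun _ => 1) ∈ K (n+(D+1)))
    (hc : Pf p q n (E+1) c (fun _ => 1) ∈ K (n+(E+1))) :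
    Pf p q n (D+E+1) (fun z => b z * c z) (fun _ => 1) ∈ K (n+(D+E+1)) := by
  classical
  set inj2 : Fin (E+1) → Fin (D+E+1) := fun s => ⟨D + s, by omega⟩ with hinj2
  set sub2 : ∀ _ : Fin (n+(E+1)), ((Fin (n+(D+E+1)) → ZMod p × ZMod q) → ZMod p × ZMod q) :=
    Fin.addCases (fun j x => x (Fin.castAdd (D+E+1) j))
      (fun s x => x (Fin.natAdd n (inj2 s))) with hsub2
  have hsub2mem : ∀ i, sub2 i ∈ K (n+(D+E+1)) := by
    intro i
    induction i using Fin.addCases with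
    | left j => rw [hsub2]; simp only [Fin.addCases_left]; exact proj_mem hK _ _
    | right s => rw [hsub2]; simp only [Fin.addCases_right]; exact proj_mem hK _ _
  set inner : (Fin (n+(D+E+1)) → ZMod p × ZMod q) → ZMod p × ZMod q :=
    fun x => Pf p q n (E+1) c (fun _ => 1) (fun i => sub2 i x) with hinner
  have hinnermem : inner ∈ K (n+(D+E+1)) := comp_mem hK hc hsub2mem
  have hinnerval : ∀ x, inner x = (c (fun j => (x (Fin.castAdd (D+E+1) j)).2) *
      ∏ s : Fin (E+1), (x (Fin.natAdd n (inj2 s))).1, 0) := by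
    intro x
    rw [hinner]
    unfold Pf
    simp only []
    congr 1
    · congr 1
      · congr 1
        funext j; rw [hsub2]; simp [Fin.addCases_left]
      · apply Finset.prod_congr rfl
        intro s _
        rw [hsub2]; simp [Fin.addCases_right]
  set sub1 : ∀ _ : Fin (n+(D+1)), ((Fin (n+(D+E+1)) → ZMod p × ZMod q) → ZMod p × ZMod q) :=
    Fin.addCases (fun j x => x (Fin.castAdd (D+E+1) j))
      (fun t x => if h' : (t : ℕ) < D then x (Fin.natAdd n (⟨t, by omega⟩ : Fin (D+E+1)))
        else inner x) with hsub1
  have hsub1mem : ∀ i, sub1 i ∈ K (n+(D+E+1)) := by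
    intro i
    induction i using Fin.addCases with
    | left j => rw [hsub1]; simp only [Fin.addCases_left]; exact proj_mem hK _ _
    | right t =>
      rw [hsub1]; simp only [Fin.addCases_right]
      by_cases h' : (t : ℕ) < D
      · simp only [dif_pos h']; exact proj_mem hK _ _
      · simp only [dif_neg h']; exact hinnermem
  have hcomp := comp_mem hK hb hsub1mem
  have heq : (fun x => Pf p q n (D+1) b (fun _ => 1) (fun i => sub1 i x))
      = Pf p q n (D+E+1) (fun z => b z * c z) (fun _ => 1) := by
    funext x
    unfold Pf
    simp only []
    have h1 : (fun j : Fin n => (sub1 (Fin.castAdd (D+1) j) x).2)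
        = fun j => (x (Fin.castAdd (D+E+1) j)).2 := by
      funext j; rw [hsub1]; simp [Fin.addCases_left]
    rw [h1]
    apply Prod.ext
    · simp only
      have h2 : (∏ t : Fin (D+1), (sub1 (Fin.natAdd n t) x).1 ^ (1:ℕ))
          = (∏ t : Fin D, (x (Fin.natAdd n (Fin.castAdd (E+1) t))).1) *
              (c (fun j => (x (Fin.castAdd (D+E+1) j)).2) *
                ∏ s : Fin (E+1), (x (Fin.natAdd n (Fin.natAdd D s))).1) := by
        rw [Fin.prod_univ_castSucc (fun t : Fin (D+1) => (sub1 (Fin.natAdd n t) x).1 ^ (1:ℕ))]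
        congr 1
        · apply Finset.prod_congr rfl
          intro t _
          rw [pow_one, hsub1]; simp only [Fin.addCases_right]
          have hlt : ((Fin.castSucc t : Fin (D+1)) : ℕ) < D := by simp [t.isLt]
          rw [dif_pos hlt]
          congr 1
        · rw [pow_one, hsub1]; simp only [Fin.addCases_right]
          have hlt : ¬ ((Fin.last D : Fin (D+1)) : ℕ) < D := by simp
          rw [dif_neg hlt, hinnerval]
          have hinjeq : ∀ s : Fin (E+1), inj2 s = Fin.natAdd D s := by
            intro s; rw [hinj2]; apply Fin.ext; simp [Fin.natAdd]
          simp only [hinjeq]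
      rw [h2]
      have hsplit : (∏ r : Fin (D+E+1), (x (Fin.natAdd n r)).1 ^ (1:ℕ))
          = (∏ t : Fin D, (x (Fin.natAdd n (Fin.castAdd (E+1) t))).1 ^ (1:ℕ)) *
            ∏ s : Fin (E+1), (x (Fin.natAdd n (Fin.natAdd D s))).1 ^ (1:ℕ) :=
        Fin.prod_univ_add (a := D) (b := E+1)
          (fun r => (x (Fin.natAdd n r)).1 ^ (1:ℕ))
      rw [hsplit]
      simp only [pow_one]
      ring
    · rfl
  rw [heq] at hcomp
  exact hcomp

lemma boost {K : ∀ n : ℕ, Set ((Fin n → ZMod p × ZMod q) → ZMod p × ZMod q)}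
    (hK : IsClone' K) {n E : ℕ} {c : (Fin n → ZMod q) → ZMod p}
    (hc : Pf p q n (E+1) c (fun _ => 1) ∈ K (n+(E+1))) :
    ∀ M : ℕ, Pf p q n (E*(M+1)+1) (fun z => c z ^ (M+1)) (fun _ => 1)
      ∈ K (n+(E*(M+1)+1)) := by
  intro M
  induction M with
  | zero =>
    have h1 : (fun z : Fin n → ZMod q => c z ^ (0+1)) = c := funext fun z => by norm_num
    rw [show E*(0+1)+1 = E+1 by ring, h1]
    exact hc
  | succ M ih =>
    have h2 := step' hK ih hc
    rw [show E*(M+1)+E+1 = E*(M+1+1)+1 by ring] at h2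
    have h3 : (fun z : Fin n → ZMod q => c z ^ (M+1) * c z)
        = fun z => c z ^ (M+1+1) := funext fun z => (pow_succ _ _).symm
    rw [h3] at h2
    exact h2

lemma pow_reduce (a : ZMod p) (M : ℕ) : a ^ ((p-1)*M + 1) = a := by
  have hp2 : 2 ≤ p := (Fact.out : p.Prime).two_le
  rcases eq_or_ne a 0 with ha | ha
  · subst ha
    exact zero_pow (by omega)
  · induction M with
    | zero => simp
    | succ M ih =>
      rw [show (p-1)*(M+1)+1 = ((p-1)*M+1) + (p-1) by ring, pow_add, ih,
        ZMod.pow_card_sub_one_eq_one ha, mul_one]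

lemma boostTo {K : ∀ n : ℕ, Set ((Fin n → ZMod p × ZMod q) → ZMod p × ZMod q)}
    (hK : IsClone' K) {n d e : ℕ} {c : (Fin n → ZMod q) → ZMod p}
    (he2 : 2 ≤ e) (hcong : ∃ R, d = e + (p-1)*R) (hd : 1 ≤ d)
    (h : Pf p q n e c (fun _ => 1) ∈ K (n+e)) :
    Pf p q n d c (fun _ => 1) ∈ K (n+d) := by
  have hp2 : 2 ≤ p := (Fact.out : p.Prime).two_le
  obtain ⟨R, hR⟩ := hcong
  rw [show e = (e-1)+1 by omega] at h
  have hb := boost hK h ((p-1)*d)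
  have hco : (fun z : Fin n → ZMod q => c z ^ ((p-1)*d+1)) = c :=
    funext fun z => pow_reduce (c z) d
  rw [hco] at hb
  have hRle : R ≤ (e-1)*d := by
    have h1 : R ≤ (p-1)*R := Nat.le_mul_of_pos_left R (by omega)
    have h2 : (p-1)*R ≤ d := by omega
    have h3 : d ≤ (e-1)*d := Nat.le_mul_of_pos_left d (by omega)
    omega
  have key : (e-1)*((p-1)*d+1)+1 = d + (p-1)*((e-1)*d - R) := by
    have h1p : (1:ℕ) ≤ p := by omega
    have h1e : (1:ℕ) ≤ e := by omega
    zify [hRle, h1p, h1e]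
    have hR'' : (d : ℤ) = e + ((p:ℤ)-1)*R := by
      have h5 := congrArg (fun t : ℕ => (t : ℤ)) hR
      push_cast [h1p] at h5
      linarith
    linear_combination (-1 : ℤ) * hR''
  rw [key] at hb
  exact redChain hK ((e-1)*d - R) d hd hb


/-! ### Part 5: bridges to induced monomials -/

lemma bridge_toInd {K : ∀ n : ℕ, Set ((Fin n → ZMod p × ZMod q) → ZMod p × ZMod q)}
    (hK : IsClone' K) {n d : ℕ} {c : (Fin n → ZMod q) → ZMod p}
    (h : Pf p q n d c (fun _ => 1) ∈ K (n+d)) :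
    indMonP p q n d c ∈ K (max n d) := by
  set sub : ∀ _ : Fin (n+d), ((Fin (max n d) → ZMod p × ZMod q) → ZMod p × ZMod q) :=
    Fin.addCases (fun j x => x (Fin.castLE (le_max_left n d) j))
      (fun t x => x (Fin.castLE (le_max_right n d) t)) with hsub
  have hsubmem : ∀ i, sub i ∈ K (max n d) := by
    intro i
    induction i using Fin.addCases with
    | left j => rw [hsub]; simp only [Fin.addCases_left]; exact proj_mem hK _ _
    | right t => rw [hsub]; simp only [Fin.addCases_right]; exact proj_mem hK _ _
  have hcomp := comp_mem hK h hsubmem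
  have heq : (fun x => Pf p q n d c (fun _ => 1) (fun i => sub i x))
      = indMonP p q n d c := by
    funext x
    unfold Pf indMonP
    simp only []
    congr 1
    congr 1
    · congr 1
      funext j
      rw [hsub]; simp [Fin.addCases_left]
    · apply Finset.prod_congr rfl
      intro t _
      rw [pow_one, hsub]; simp [Fin.addCases_right]
  rw [heq] at hcomp
  exact hcomp

lemma bridge_fromInd {K : ∀ n : ℕ, Set ((Fin n → ZMod p × ZMod q) → ZMod p × ZMod q)}
    (hK : IsClone' K) (hadd : (fun x : Fin 2 → ZMod p × ZMod q => x 0 + x 1) ∈ K 2)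
    (cop : Nat.Coprime p q) {n d : ℕ} {c : (Fin n → ZMod q) → ZMod p}
    (h : indMonP p q n d c ∈ K (max n d)) :
    Pf p q n d c (fun _ => 1) ∈ K (n+d) := by
  set kp := crt cop 1 0 with hkp
  set kq := crt cop 0 1 with hkq
  have hkp_smul : ∀ y : ZMod p × ZMod q, kp • y = (y.1, 0) := by
    intro y; rw [hkp, crt_smul]; simp
  have hkq_smul : ∀ y : ZMod p × ZMod q, kq • y = (0, y.2) := by
    intro y; rw [hkq, crt_smul]; simp
  set ci : Fin (max n d) → Fin (n+d) :=
    fun i => ⟨if (i:ℕ) < n then (i:ℕ) else 0, by split <;> omega⟩ with hci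
  set di : Fin (max n d) → Fin (n+d) :=
    fun i => ⟨if (i:ℕ) < d then n + (i:ℕ) else 0, by split <;> omega⟩ with hdi
  set sub : ∀ _ : Fin (max n d), ((Fin (n+d) → ZMod p × ZMod q) → ZMod p × ZMod q) :=
    fun i x => kq • x (ci i) + kp • x (di i) with hsub
  have hsubmem : ∀ i, sub i ∈ K (n+d) := by
    intro i
    exact add_mem hK hadd (smul_mem hK hadd (proj_mem hK _ _) kq)
      (smul_mem hK hadd (proj_mem hK _ _) kp)
  have hcomp := comp_mem hK h hsubmem
  have hsubval : ∀ (i : Fin (max n d)) (x : Fin (n+d) → ZMod p × ZMod q),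
      sub i x = ((x (di i)).1, (x (ci i)).2) := by
    intro i x
    rw [hsub]
    simp only []
    rw [hkq_smul, hkp_smul]
    apply Prod.ext <;> simp
  have heq : (fun x => indMonP p q n d c (fun i => sub i x))
      = Pf p q n d c (fun _ => 1) := by
    funext x
    unfold indMonP Pf
    simp only []
    congr 1
    congr 1
    · congr 1
      funext j
      rw [hsubval]
      have : ci (Fin.castLE (le_max_left n d) j) = Fin.castAdd d j := by
        rw [hci]
        apply Fin.ext
        simp [j.isLt]
      rw [this]
    · apply Finset.prod_congr rfl
      intro t _
      rw [hsubval, pow_one]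
      have : di (Fin.castLE (le_max_right n d) t) = Fin.natAdd n t := by
        rw [hdi]
        apply Fin.ext
        simp [t.isLt, Fin.natAdd]
      rw [this]
  rw [heq] at hcomp
  exact hcomp

/-! ### Part 6: the main one-sided transfer for P-parts -/

lemma main_P (hpq : p ≠ q)
    {C D : ∀ n : ℕ, Set ((Fin n → ZMod p × ZMod q) → ZMod p × ZMod q)}
    (hC : IsClone' C) (hD : IsClone' D)
    (hCadd : (fun x : Fin 2 → ZMod p × ZMod q => x 0 + x 1) ∈ C 2)
    (hDadd : (fun x : Fin 2 → ZMod p × ZMod q => x 0 + x 1) ∈ D 2)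
    (hPmono : ∀ (l i : ℕ) (r : (Fin l → ZMod q) → ZMod p), i ≤ p →
      indMonP p q l i r ∈ C (max l i) → indMonP p q l i r ∈ D (max l i)) :
    ∀ (n : ℕ) (f : (Fin n → ZMod p × ZMod q) → ZMod p × ZMod q), f ∈ C n →
      (fun x => ((f x).1, (0 : ZMod q))) ∈ D n := by
  intro n f hf
  have hp2 : 2 ≤ p := (Fact.out : p.Prime).two_le
  have cop : Nat.Coprime p q :=
    (Nat.coprime_primes (Fact.out : p.Prime) (Fact.out : q.Prime)).mpr hpq
  set kp := crt cop 1 0 with hkp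
  set kq := crt cop 0 1 with hkq
  have hkp_smul : ∀ y : ZMod p × ZMod q, kp • y = (y.1, 0) := by
    intro y; rw [hkp, crt_smul]; simp
  have hkq_smul : ∀ y : ZMod p × ZMod q, kq • y = (0, y.2) := by
    intro y; rw [hkq, crt_smul]; simp
  have hcomb : ∀ aa bb : ZMod p × ZMod q, kq • aa + kp • bb = (bb.1, aa.2) := by
    intro aa bb
    rw [hkq_smul, hkp_smul]
    apply Prod.ext <;> simp
  set fP := fun x : Fin n → ZMod p × ZMod q => kp • f x with hfPdef
  have hfP : fP ∈ C n := smul_mem hC hCadd hf kp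
  have hfPval : ∀ x, fP x = ((f x).1, 0) := by
    intro x; rw [hfPdef]; simp only []; rw [hkp_smul]
  set sub0 : ∀ _ : Fin n, ((Fin (n+n) → ZMod p × ZMod q) → ZMod p × ZMod q) :=
    fun j x => kq • x (Fin.castAdd n j) + kp • x (Fin.natAdd n j) with hsub0
  have hsub0mem : ∀ j, sub0 j ∈ C (n+n) := fun j =>
    add_mem hC hCadd (smul_mem hC hCadd (proj_mem hC _ _) kq)
      (smul_mem hC hCadd (proj_mem hC _ _) kp)
  set fhat := fun x : Fin (n+n) → ZMod p × ZMod q => fP (fun j => sub0 j x) with hfhat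
  have hfhatC : fhat ∈ C (n+n) := comp_mem hC hfP hsub0mem
  have hsep : SepOf p q n n fhat := by
    refine ⟨fun z u => (f (fun j => (u j, z j))).1, ?_⟩
    intro x
    rw [hfhat]
    simp only []
    have harg : (fun j => sub0 j x)
        = fun j => ((x (Fin.natAdd n j)).1, (x (Fin.castAdd n j)).2) := by
      funext j
      rw [hsub0]
      simp only []
      exact hcomb _ _
    rw [harg, hfPval]
  -- the per-component pipeline
  have hAll : ∀ m : Fin n → Fin p,
      Pf p q n n (coef p q n n fhat m) (fun t => ((m t : ℕ))) ∈ D (n+n) := by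
    intro m
    set cm := coef p q n n fhat m with hcm
    have h1 : Pf p q n n cm (fun t => ((m t : ℕ))) ∈ C (n+n) :=
      extract_mem hC hCadd cop hfhatC hsep m
    set mv : Fin n → ℕ := fun t => ((m t : ℕ)) with hmv
    set d := ∑ t, mv t with hd
    have h0 : (n = 0 ∨ 0 < n + ∑ t, mv t) := by
      rcases Nat.eq_zero_or_pos n with h | h
      · left; exact h
      · right; omega
    have h2 : Pf p q n (∑ t, mv t) cm (fun _ => 1) ∈ C (n + ∑ t, mv t) :=
      flat hC hCadd cop (∑ t, (mv t - 1)) n mv cm (fun t => (m t).isLt) le_rfl h0 h1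
    rw [← hd] at h2
    obtain ⟨R, hRspec⟩ := dstar_spec hp2 d
    have h3 : Pf p q n (dstar p d) cm (fun _ => 1) ∈ C (n + dstar p d) := by
      by_cases hdp : d ≤ p
      · have hds : dstar p d = d := by unfold dstar; rw [if_pos hdp]
        rw [hds]; exact h2
      · have hge2 := dstar_ge2 (p := p) (show p < d by omega)
        rw [hRspec] at h2
        exact redChain hC R (dstar p d) (by omega) h2
    have h4 : indMonP p q n (dstar p d) cm ∈ C (max n (dstar p d)) := bridge_toInd hC h3
    have h5 := hPmono n (dstar p d) cm (dstar_le hp2 d) h4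
    have h6 : Pf p q n (dstar p d) cm (fun _ => 1) ∈ D (n + dstar p d) :=
      bridge_fromInd hD hDadd cop h5
    have h7 : Pf p q n d cm (fun _ => 1) ∈ D (n + d) := by
      by_cases hdp : d ≤ p
      · have hds : dstar p d = d := by unfold dstar; rw [if_pos hdp]
        rw [hds] at h6; exact h6
      · exact boostTo hD (dstar_ge2 (show p < d by omega)) ⟨R, hRspec⟩ (by omega) h6
    rw [hd] at h7
    exact unflat hD h7
  -- sum the components
  haveI : NeZero p := ⟨(Fact.out : p.Prime).ne_zero⟩
  have hwit : Pf p q n n (coef p q n n fhat (fun _ => 0)) (fun t => (((fun _ : Fin n => (0 : Fin p)) t : ℕ))) ∈ D (n+n) := hAll (fun _ => 0)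
  have hsum : (fun x => ∑ m : Fin n → Fin p,
      Pf p q n n (coef p q n n fhat m) (fun t => ((m t : ℕ))) x) ∈ D (n+n) :=
    sum_mem hD hDadd hwit Finset.univ _ (fun m _ => hAll m)
  have hdecomp : fhat = fun x => ∑ m : Fin n → Fin p,
      Pf p q n n (coef p q n n fhat m) (fun t => ((m t : ℕ))) x :=
    funext fun x => decomp_pointwise hsep x
  have hfhatD : fhat ∈ D (n+n) := by rw [hdecomp]; exact hsum
  -- pull back along the diagonal
  set dup : ∀ _ : Fin (n+n), ((Fin n → ZMod p × ZMod q) → ZMod p × ZMod q) :=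
    Fin.addCases (fun j x => x j) (fun j x => x j) with hdup
  have hdupmem : ∀ i, dup i ∈ D n := by
    intro i
    induction i using Fin.addCases with
    | left j => rw [hdup]; simp only [Fin.addCases_left]; exact proj_mem hD _ _
    | right j => rw [hdup]; simp only [Fin.addCases_right]; exact proj_mem hD _ _
  have hfinal := comp_mem hD hfhatD hdupmem
  have heq : (fun x => fhat (fun i => dup i x)) = fun x => ((f x).1, (0 : ZMod q)) := by
    funext x
    rw [hfhat]
    simp only []
    have harg : (fun j => sub0 j (fun i => dup i x)) = x := by
      funext j
      rw [hsub0]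
      simp only []
      have h1 : dup (Fin.castAdd n j) x = x j := by
        rw [hdup]; simp [Fin.addCases_left]
      have h2 : dup (Fin.natAdd n j) x = x j := by
        rw [hdup]; simp only []
        rw [Fin.addCases_right]
      rw [h1, h2, hcomb]
    rw [harg, hfPval]
  rw [heq] at hfinal
  exact hfinal

end extraction

/-! ### Part 7: symmetry via swapping the two factors -/

section swap
variable {p q : ℕ}

def conj {m : ℕ} (h : (Fin m → ZMod q × ZMod p) → ZMod q × ZMod p) :
    (Fin m → ZMod p × ZMod q) → ZMod p × ZMod q :=
  fun x => Prod.swap (h (fun i => Prod.swap (x i)))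

def swapClone (C : ∀ n : ℕ, Set ((Fin n → ZMod p × ZMod q) → ZMod p × ZMod q)) :
    ∀ n : ℕ, Set ((Fin n → ZMod q × ZMod p) → ZMod q × ZMod p) :=
  fun n => {h | conj h ∈ C n}

lemma swapClone_isClone {C : ∀ n : ℕ, Set ((Fin n → ZMod p × ZMod q) → ZMod p × ZMod q)}
    (hC : IsClone' C) : IsClone' (swapClone C) := by
  constructor
  · intro n i
    show conj (fun x => x i) ∈ C n
    have h : conj (fun x : Fin n → ZMod q × ZMod p => x i)
        = (fun x : Fin n → ZMod p × ZMod q => x i) := by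
      funext x; unfold conj; simp
    rw [h]; exact hC.1 n i
  · intro n m F G hF hG
    show conj (fun x => F (fun i => G i x)) ∈ C m
    have h : conj (fun x => F (fun i => G i x))
        = (fun x => conj F (fun i => conj (G i) x)) := by
      funext x; unfold conj; simp
    rw [h]
    exact hC.2 n m (conj F) (fun i => conj (G i)) hF (fun i => hG i)

lemma swapClone_add {C : ∀ n : ℕ, Set ((Fin n → ZMod p × ZMod q) → ZMod p × ZMod q)}
    (hCadd : (fun x : Fin 2 → ZMod p × ZMod q => x 0 + x 1) ∈ C 2) :
    (fun x : Fin 2 → ZMod q × ZMod p => x 0 + x 1) ∈ swapClone C 2 := by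
  show conj (fun x : Fin 2 → ZMod q × ZMod p => x 0 + x 1) ∈ C 2
  have h : conj (fun x : Fin 2 → ZMod q × ZMod p => x 0 + x 1)
      = (fun x : Fin 2 → ZMod p × ZMod q => x 0 + x 1) := by
    funext x; unfold conj
    apply Prod.ext <;> simp
  rw [h]; exact hCadd

lemma conj_indMonP (l i : ℕ) (r : (Fin l → ZMod p) → ZMod q) :
    conj (indMonP q p l i r) = indMonQ p q l i r := by
  funext x
  unfold conj indMonP indMonQ
  apply Prod.ext <;> simp

end swap

section final
variable {p q : ℕ} [Fact p.Prime] [Fact q.Prime]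

lemma transfer (hpq : p ≠ q)
    {C D : ∀ n : ℕ, Set ((Fin n → ZMod p × ZMod q) → ZMod p × ZMod q)}
    (hC : IsClone' C) (hD : IsClone' D)
    (hCadd : (fun x : Fin 2 → ZMod p × ZMod q => x 0 + x 1) ∈ C 2)
    (hDadd : (fun x : Fin 2 → ZMod p × ZMod q => x 0 + x 1) ∈ D 2)
    (hPm : ∀ (l i : ℕ) (r : (Fin l → ZMod q) → ZMod p), i ≤ p →
      indMonP p q l i r ∈ C (max l i) → indMonP p q l i r ∈ D (max l i))
    (hQm : ∀ (l j : ℕ) (r' : (Fin l → ZMod p) → ZMod q), j ≤ q →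
      indMonQ p q l j r' ∈ C (max l j) → indMonQ p q l j r' ∈ D (max l j)) :
    ∀ (n : ℕ) (f : (Fin n → ZMod p × ZMod q) → ZMod p × ZMod q), f ∈ C n → f ∈ D n := by
  intro n f hf
  have h1 : (fun x => ((f x).1, (0 : ZMod q))) ∈ D n :=
    main_P hpq hC hD hCadd hDadd hPm n f hf
  -- swapped side
  have hqp : q ≠ p := hpq.symm
  have hCs := swapClone_isClone hC
  have hDs := swapClone_isClone hD
  have hCsa := swapClone_add hCadd
  have hDsa := swapClone_add hDadd
  have hPm' : ∀ (l i : ℕ) (r : (Fin l → ZMod p) → ZMod q), i ≤ q →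
      indMonP q p l i r ∈ swapClone C (max l i) →
      indMonP q p l i r ∈ swapClone D (max l i) := by
    intro l i r hi h
    show conj (indMonP q p l i r) ∈ D _
    rw [conj_indMonP]
    have h' : conj (indMonP q p l i r) ∈ C (l ⊔ i) := h
    rw [conj_indMonP] at h'
    exact hQm l i r hi h'
  set f' : (Fin n → ZMod q × ZMod p) → ZMod q × ZMod p :=
    fun x => Prod.swap (f (fun i => Prod.swap (x i))) with hf'
  have hf'C : f' ∈ swapClone C n := by
    show conj f' ∈ C n
    have h : conj f' = f := by
      funext x; rw [hf']; unfold conj; simp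
    rw [h]; exact hf
  have h2 := main_P hqp hCs hDs hCsa hDsa hPm' n f' hf'C
  have h2' : conj (fun x : Fin n → ZMod q × ZMod p => ((f' x).1, (0 : ZMod p))) ∈ D n := h2
  have hco : conj (fun x : Fin n → ZMod q × ZMod p => ((f' x).1, (0 : ZMod p)))
      = fun x => ((0 : ZMod p), (f x).2) := by
    funext x
    unfold conj
    rw [hf']
    simp
  rw [hco] at h2'
  have h3 := add_mem hD hDadd h1 h2'
  have h4 : (fun x => ((f x).1, (0:ZMod q)) + ((0:ZMod p), (f x).2)) = f := by
    funext x
    apply Prod.ext <;> simp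
  rw [h4] at h3
  exact h3

end final
end CDIM


theorem clones_determined_by_induced_monomials (p q : ℕ) (hp : p.Prime) (hq : q.Prime)
    (hpq : p ≠ q)
    (C D : ∀ n : ℕ, Set ((Fin n → ZMod p × ZMod q) → ZMod p × ZMod q))
    (hC : IsClone C) (hD : IsClone D)
    (hCadd : (fun x : Fin 2 → ZMod p × ZMod q => x 0 + x 1) ∈ C 2)
    (hDadd : (fun x : Fin 2 → ZMod p × ZMod q => x 0 + x 1) ∈ D 2)
    (hP : ∀ (l i : ℕ) (r : (Fin l → ZMod q) → ZMod p), i ≤ p →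
      (indMonP p q l i r ∈ C (max l i) ↔ indMonP p q l i r ∈ D (max l i)))
    (hQ : ∀ (l j : ℕ) (r' : (Fin l → ZMod p) → ZMod q), j ≤ q →
      (indMonQ p q l j r' ∈ C (max l j) ↔ indMonQ p q l j r' ∈ D (max l j))) :
    C = D := by
  haveI : Fact p.Prime := ⟨hp⟩
  haveI : Fact q.Prime := ⟨hq⟩
  have hC' : CDIM.IsClone' C := hC
  have hD' : CDIM.IsClone' D := hD
  have h1 : ∀ (n : ℕ) (f : (Fin n → ZMod p × ZMod q) → ZMod p × ZMod q),
      f ∈ C n → f ∈ D n :=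
    CDIM.transfer hpq hC' hD' hCadd hDadd
      (fun l i r hi => (hP l i r hi).mp) (fun l j r' hj => (hQ l j r' hj).mp)
  have h2 : ∀ (n : ℕ) (f : (Fin n → ZMod p × ZMod q) → ZMod p × ZMod q),
      f ∈ D n → f ∈ C n :=
    CDIM.transfer hpq hD' hC' hDadd hCadd
      (fun l i r hi => (hP l i r hi).mpr) (fun l j r' hj => (hQ l j r' hj).mpr)
  funext n
  exact Set.eq_of_subset_of_subset (fun f hf => h1 n f hf) (fun f hf => h2 n f hf)
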